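/- Let u(·,y) ∈ H_0^1(D) solve the weak elliptic problem ∫_D a(x,y)∇u(x,y)·∇v(x)dx = ⟨f,v⟩ for all v ∈ H_0^1(D), with affine coefficient a(x,y) = a_0(x) + Σ_{j≥1} y_j ψ_j(x), y ∈ [−1,1]^ℕ, satisfying 0 < a_min ≤ a(x,y) ≤ a_max uniformly, where b_j := ‖ψ_j‖_{L^∞(D)} satisfies the standard regularity bound ‖∂^ν u(·,y)‖_{H_0^1} ≤ (‖f‖_{H^{−1}}/a_min^{|ν|+1}) |ν|! ∏_j b_j^{ν_j}. Let G_nl(v) = ∫_D v(x)² dx. Then for every finitely supported multi-index ν and every y ∈ [−1,1]^ℕ, |∂^ν G_nl(u(·,y))| ≤ (C_P² ‖f‖²_{H^{−1}} / a_min^{|ν|+2}) (|ν|+1)! ∏_j b_j^{ν_j}, where C_P is the Poincaré constant of the embedding H_0^1(D) ↪ L²(D). -/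

import Mathlib

open MeasureTheory

/-- `Dg` is the family of all mixed partial derivatives (in the parametric variables)
of `g`: `Dg 0 = g`, and differentiating `Dg ν` in the `j`-th coordinate yields
`Dg (ν + e_j)`. -/
def IsPDerivFamily {X : Type*} [NormedAddCommGroup X] [NormedSpace ℝ X]
    (g : (ℕ → ℝ) → X) (Dg : (ℕ →₀ ℕ) → (ℕ → ℝ) → X) : Prop :=
  Dg 0 = g ∧
    ∀ (ν : ℕ →₀ ℕ) (j : ℕ) (y : ℕ → ℝ),
      HasDerivAt (fun t => Dg ν (Function.update y j t))
        (Dg (ν + Finsupp.single j 1) y) (y j)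

lemma hasDerivAt_msum {α : Type*} {X : Type*} [NormedAddCommGroup X] [NormedSpace ℝ X]
    (s : Multiset α) (F : α → ℝ → X) (F' : α → X) (x : ℝ)
    (h : ∀ a ∈ s, HasDerivAt (F a) (F' a) x) :
    HasDerivAt (fun t => (s.map (fun a => F a t)).sum) ((s.map F').sum) x := by
  induction s using Multiset.induction_on with
  | empty => simpa using hasDerivAt_const x (0 : X)
  | cons a s ih =>
    simp only [Multiset.map_cons, Multiset.sum_cons]
    exact (h a (Multiset.mem_cons_self a s)).add
      (ih fun b hb => h b (Multiset.mem_cons_of_mem hb))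

lemma pderiv_unique {X : Type*} [NormedAddCommGroup X] [NormedSpace ℝ X]
    {g : (ℕ → ℝ) → X} {D1 D2 : (ℕ →₀ ℕ) → (ℕ → ℝ) → X}
    (h1 : IsPDerivFamily g D1) (h2 : IsPDerivFamily g D2) (ν : ℕ →₀ ℕ) : D1 ν = D2 ν := by
  classical
  have key : ∀ s : Multiset ℕ, D1 s.toFinsupp = D2 s.toFinsupp := by
    intro s
    induction s using Multiset.induction_on with
    | empty => rw [Multiset.toFinsupp_zero, h1.1, h2.1]
    | cons a s ih =>
      funext y
      have e : (a ::ₘ s).toFinsupp = s.toFinsupp + Finsupp.single a 1 := by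
        rw [← Multiset.singleton_add, Multiset.toFinsupp_add, Multiset.toFinsupp_singleton,
          add_comm]
      rw [e]
      have d1 := h1.2 s.toFinsupp a y
      have d2 := h2.2 s.toFinsupp a y
      rw [ih] at d1
      exact d1.unique d2
  have h := key ν.toMultiset
  rwa [Finsupp.toMultiset_toFinsupp] at h

lemma powerset_fact_sum : ∀ s : Multiset ℕ,
    ((s.powerset.map (fun t => Nat.factorial (Multiset.card t) *
      Nat.factorial (Multiset.card s - Multiset.card t))).sum)
      = Nat.factorial (Multiset.card s + 1) := by
  intro s
  induction s using Multiset.induction_on with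
  | empty => simp
  | cons a s ih =>
    rw [Multiset.powerset_cons, Multiset.map_add, Multiset.sum_add, Multiset.map_map]
    have e2 : (Multiset.map ((fun t => Nat.factorial (Multiset.card t) *
        Nat.factorial (Multiset.card (a ::ₘ s) - Multiset.card t)) ∘ Multiset.cons a)
          s.powerset)
        = Multiset.map (fun t => Nat.factorial (Multiset.card t + 1) *
            Nat.factorial (Multiset.card s - Multiset.card t)) s.powerset := by
      apply Multiset.map_congr rfl
      intro t _
      simp [Function.comp, Multiset.card_cons, Nat.succ_sub_succ]
    rw [e2, ← Multiset.sum_map_add]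
    have e3 : (Multiset.map (fun t => Nat.factorial (Multiset.card t) *
          Nat.factorial (Multiset.card (a ::ₘ s) - Multiset.card t) +
          Nat.factorial (Multiset.card t + 1) *
          Nat.factorial (Multiset.card s - Multiset.card t)) s.powerset)
        = Multiset.map (fun t => (Multiset.card s + 2) * (Nat.factorial (Multiset.card t) *
            Nat.factorial (Multiset.card s - Multiset.card t))) s.powerset := by
      apply Multiset.map_congr rfl
      intro t ht
      have hle : Multiset.card t ≤ Multiset.card s :=
        Multiset.card_le_card (Multiset.mem_powerset.mp ht)
      obtain ⟨c, hc⟩ := Nat.le.dest hle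
      rw [Multiset.card_cons, ← hc]
      have h1 : Multiset.card t + c + 1 - Multiset.card t = c + 1 := by omega
      have h2 : Multiset.card t + c - Multiset.card t = c := by omega
      rw [h1, h2, Nat.factorial_succ, Nat.factorial_succ (Multiset.card t)]
      ring
    rw [e3, Multiset.sum_map_mul_left, ih, Multiset.card_cons]
    conv_rhs => rw [Nat.factorial_succ]

/-- **Parametric regularity of the nonlinear quantity of interest `G_nl(v) = ∫_D v²`.**
The domain `D` is modelled by a measure space `(Ω, μ)`; `X` plays the role of
`H_0^1(D)`, with gradient `grad : X → (Ω → E)`, point evaluation `toFun : X → (Ω → ℝ)`,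
norm `‖v‖_X² = ∫ ‖∇v‖²`, and Poincaré inequality `∫ v² ≤ C_P² ‖v‖_X²`. Let
`U y ∈ X` solve the weak problem `∫ a(·,y) ∇(U y)·∇v dμ = ⟨f,v⟩` for all `v`, with affine
coefficient `a(x,y) = a₀(x) + Σ_j y_j ψ_j(x)`, `0 < a_min ≤ a(x,y) ≤ a_max`, and suppose
the solution satisfies the standard regularity bound
`‖∂^ν U(y)‖_X ≤ (‖f‖/a_min^{|ν|+1}) |ν|! ∏_j b_j^{ν_j}` on `[−1,1]^ℕ`, where
`b_j = ‖ψ_j‖_{L^∞}`. Then the derivatives of `y ↦ G_nl(U y)` satisfy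
`|∂^ν G_nl(U y)| ≤ (C_P² ‖f‖² / a_min^{|ν|+2}) (|ν|+1)! ∏_j b_j^{ν_j}`. -/
theorem nonlinear_qoi_regularity
    {Ω : Type*} [MeasurableSpace Ω] (μ : Measure Ω)
    {E : Type*} [NormedAddCommGroup E] [InnerProductSpace ℝ E]
    {X : Type*} [NormedAddCommGroup X] [NormedSpace ℝ X]
    (grad : X →ₗ[ℝ] Ω → E) (toFun : X →ₗ[ℝ] Ω → ℝ)
    (hXnorm : ∀ v : X, ‖v‖ ^ 2 = ∫ x, ‖grad v x‖ ^ 2 ∂μ)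
    (hXint : ∀ v w : X, Integrable (fun x => (inner ℝ (grad v x) (grad w x) : ℝ)) μ)
    (hint : ∀ v w : X, Integrable (fun x => toFun v x * toFun w x) μ)
    (CP : ℝ) (hCP : 0 < CP)
    (hPoincare : ∀ v : X, (∫ x, toFun v x ^ 2 ∂μ) ≤ CP ^ 2 * ‖v‖ ^ 2)
    (a₀ : Ω → ℝ) (ψ : ℕ → Ω → ℝ) (b : ℕ → ℝ) (hb0 : ∀ j, 0 ≤ b j)
    (hψb : ∀ j, ∀ᵐ x ∂μ, |ψ j x| ≤ b j) (hbsum : Summable b)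
    (amin amax : ℝ) (hamin : 0 < amin)
    (hell : ∀ y : ℕ → ℝ, (∀ j, y j ∈ Set.Icc (-1 : ℝ) 1) →
      ∀ᵐ x ∂μ, amin ≤ a₀ x + ∑' j, y j * ψ j x ∧ a₀ x + ∑' j, y j * ψ j x ≤ amax)
    (f : X →L[ℝ] ℝ) (U : (ℕ → ℝ) → X)
    (hweak : ∀ y : ℕ → ℝ, (∀ j, y j ∈ Set.Icc (-1 : ℝ) 1) → ∀ v : X,
      (∫ x, (a₀ x + ∑' j, y j * ψ j x) * (inner ℝ (grad (U y) x) (grad v x) : ℝ) ∂μ) = f v)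
    (DU : (ℕ →₀ ℕ) → (ℕ → ℝ) → X) (hDU : IsPDerivFamily U DU)
    (hreg : ∀ ν : ℕ →₀ ℕ, ∀ y : ℕ → ℝ, (∀ j, y j ∈ Set.Icc (-1 : ℝ) 1) →
      ‖DU ν y‖ ≤ ‖f‖ / amin ^ ((ν.sum fun _ n => n) + 1) *
        Nat.factorial (ν.sum fun _ n => n) * ∏ j ∈ ν.support, b j ^ ν j)
    (DF : (ℕ →₀ ℕ) → (ℕ → ℝ) → ℝ)
    (hDF : IsPDerivFamily (fun y => ∫ x, toFun (U y) x ^ 2 ∂μ) DF) :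
    ∀ ν : ℕ →₀ ℕ, ∀ y : ℕ → ℝ, (∀ j, y j ∈ Set.Icc (-1 : ℝ) 1) →
      |DF ν y| ≤ CP ^ 2 * ‖f‖ ^ 2 / amin ^ ((ν.sum fun _ n => n) + 2) *
        Nat.factorial ((ν.sum fun _ n => n) + 1) * ∏ j ∈ ν.support, b j ^ ν j := by
  classical
  -- Cauchy–Schwarz for the bilinear form
  have hCS : ∀ v w : X, |∫ x, toFun v x * toFun w x ∂μ| ≤ CP ^ 2 * ‖v‖ * ‖w‖ := by
    intro v w
    set A := ∫ x, toFun v x * toFun v x ∂μ with hA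
    set Bi := ∫ x, toFun v x * toFun w x ∂μ with hBi
    set C0 := ∫ x, toFun w x * toFun w x ∂μ with hC0
    have hA0 : 0 ≤ A := integral_nonneg fun x => mul_self_nonneg _
    have hC00 : 0 ≤ C0 := integral_nonneg fun x => mul_self_nonneg _
    have hAle : A ≤ CP ^ 2 * ‖v‖ ^ 2 := by
      have h := hPoincare v
      rw [hA]
      simpa [pow_two] using h
    have hCle : C0 ≤ CP ^ 2 * ‖w‖ ^ 2 := by
      have h := hPoincare w
      rw [hC0]
      simpa [pow_two] using h
    have hquad : ∀ t : ℝ, 0 ≤ C0 * (t * t) + (2 * Bi) * t + A := by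
      intro t
      have h1 : 0 ≤ ∫ x, (toFun v x + t * toFun w x) * (toFun v x + t * toFun w x) ∂μ :=
        integral_nonneg fun x => mul_self_nonneg _
      have h2 : (∫ x, (toFun v x + t * toFun w x) * (toFun v x + t * toFun w x) ∂μ)
          = A + ((2 * t) * Bi + (t * t) * C0) := by
        have hi1 := hint v v
        have hi2 := (hint v w).const_mul (2 * t)
        have hi3 := (hint w w).const_mul (t * t)
        have e : ∀ x, (toFun v x + t * toFun w x) * (toFun v x + t * toFun w x)
            = toFun v x * toFun v x + 2 * t * (toFun v x * toFun w x)
              + t * t * (toFun w x * toFun w x) := fun x => by ring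
        calc (∫ x, (toFun v x + t * toFun w x) * (toFun v x + t * toFun w x) ∂μ)
            = ∫ x, (toFun v x * toFun v x + 2 * t * (toFun v x * toFun w x)
              + t * t * (toFun w x * toFun w x)) ∂μ := by simp_rw [e]
          _ = A + ((2 * t) * Bi + (t * t) * C0) := by
              have hi12 : Integrable (fun x => toFun v x * toFun v x
                  + 2 * t * (toFun v x * toFun w x)) μ := hi1.add hi2
              rw [integral_add hi12 hi3, integral_add hi1 hi2,
                integral_const_mul, integral_const_mul]
              ring
      rw [h2] at h1
      linarith
    have hd := discrim_le_zero hquad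
    rw [discrim] at hd
    have hBi2 : Bi ^ 2 ≤ (CP ^ 2 * ‖v‖ * ‖w‖) ^ 2 := by
      have h3 : Bi ^ 2 ≤ C0 * A := by nlinarith
      have h4 : C0 * A ≤ (CP ^ 2 * ‖w‖ ^ 2) * (CP ^ 2 * ‖v‖ ^ 2) :=
        mul_le_mul hCle hAle hA0 (by positivity)
      calc Bi ^ 2 ≤ (CP ^ 2 * ‖w‖ ^ 2) * (CP ^ 2 * ‖v‖ ^ 2) := le_trans h3 h4
        _ = (CP ^ 2 * ‖v‖ * ‖w‖) ^ 2 := by ring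
    calc |Bi| = Real.sqrt (Bi ^ 2) := (Real.sqrt_sq_eq_abs _).symm
      _ ≤ Real.sqrt ((CP ^ 2 * ‖v‖ * ‖w‖) ^ 2) := Real.sqrt_le_sqrt hBi2
      _ = CP ^ 2 * ‖v‖ * ‖w‖ := Real.sqrt_sq (by positivity)
  -- commutativity of the form
  have comm : ∀ v w : X, (∫ x, toFun v x * toFun w x ∂μ) = ∫ x, toFun w x * toFun v x ∂μ := by
    intro v w
    congr 1
    funext x
    ring
  have add_l : ∀ v v' w : X, (∫ x, toFun (v + v') x * toFun w x ∂μ)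
      = (∫ x, toFun v x * toFun w x ∂μ) + ∫ x, toFun v' x * toFun w x ∂μ := by
    intro v v' w
    rw [← integral_add (hint v w) (hint v' w)]
    congr 1
    funext x
    simp only [map_add, Pi.add_apply]
    ring
  have smul_l : ∀ (c : ℝ) (v w : X), (∫ x, toFun (c • v) x * toFun w x ∂μ)
      = c * ∫ x, toFun v x * toFun w x ∂μ := by
    intro c v w
    rw [← integral_const_mul]
    congr 1
    funext x
    simp only [_root_.map_smul, Pi.smul_apply, smul_eq_mul]
    ring
  set Bl : X →ₗ[ℝ] X →ₗ[ℝ] ℝ := LinearMap.mk₂ ℝ (fun v w => ∫ x, toFun v x * toFun w x ∂μ)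
    (fun v v' w => by rw [add_l])
    (fun c v w => by rw [smul_eq_mul, smul_l])
    (fun v w w' => by rw [comm, add_l, comm w v, comm w' v])
    (fun c v w => by rw [smul_eq_mul, comm, smul_l, comm w v]) with hBl
  set B : X →L[ℝ] X →L[ℝ] ℝ := LinearMap.mkContinuous₂ Bl (CP ^ 2)
    (fun v w => by simpa [hBl, Real.norm_eq_abs] using hCS v w) with hB
  have hBapp : ∀ v w : X, B v w = ∫ x, toFun v x * toFun w x ∂μ := fun v w => rfl
  -- derivative of a single summand
  have hBD : ∀ (m m' : ℕ →₀ ℕ) (j : ℕ) (y : ℕ → ℝ),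
      HasDerivAt (fun t => B (DU m (Function.update y j t)) (DU m' (Function.update y j t)))
        (B (DU (m + Finsupp.single j 1) y) (DU m' y)
          + B (DU m y) (DU (m' + Finsupp.single j 1) y)) (y j) := by
    intro m m' j y
    have h1 := hDU.2 m j y
    have h2 := hDU.2 m' j y
    have hc : HasDerivAt (fun t => B (DU m (Function.update y j t)))
        (B (DU (m + Finsupp.single j 1) y)) (y j) :=
      B.hasFDerivAt.comp_hasDerivAt (y j) h1
    have := hc.clm_apply h2
    simpa [Function.update_eq_self] using this
  -- the explicit derivative family
  set T : (ℕ →₀ ℕ) → (ℕ → ℝ) → ℝ := fun ν y =>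
    ((ν.toMultiset.powerset).map
      (fun t => B (DU t.toFinsupp y) (DU (ν.toMultiset - t).toFinsupp y))).sum with hT
  have hTfam : IsPDerivFamily (fun y => ∫ x, toFun (U y) x ^ 2 ∂μ) T := by
    constructor
    · funext y
      rw [hT]
      simp only [Finsupp.toMultiset_zero, Multiset.powerset_zero, Multiset.map_singleton,
        Multiset.sum_singleton, Multiset.sub_zero, Multiset.toFinsupp_zero, hDU.1]
      rw [hBapp]
      congr 1
      funext x
      ring
    · intro ν j y
      set s := ν.toMultiset with hs
      have hder := hasDerivAt_msum s.powerset
        (fun t r => B (DU t.toFinsupp (Function.update y j r))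
          (DU (s - t).toFinsupp (Function.update y j r)))
        (fun t => B (DU (t.toFinsupp + Finsupp.single j 1) y) (DU (s - t).toFinsupp y)
          + B (DU t.toFinsupp y) (DU ((s - t).toFinsupp + Finsupp.single j 1) y))
        (y j)
        (fun t _ => hBD t.toFinsupp (s - t).toFinsupp j y)
      have hmatch : ((s.powerset).map
          (fun t => B (DU (t.toFinsupp + Finsupp.single j 1) y) (DU (s - t).toFinsupp y)
            + B (DU t.toFinsupp y) (DU ((s - t).toFinsupp + Finsupp.single j 1) y))).sum
          = T (ν + Finsupp.single j 1) y := by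
        have hms : (ν + Finsupp.single j 1).toMultiset = j ::ₘ s := by
          rw [Finsupp.toMultiset_add, Finsupp.toMultiset_single, one_nsmul, add_comm,
            Multiset.singleton_add, hs]
        rw [hT]
        simp only [hms, Multiset.powerset_cons, Multiset.map_add, Multiset.sum_add,
          Multiset.map_map]
        have h1 : Multiset.map (fun t => B (DU t.toFinsupp y) (DU ((j ::ₘ s) - t).toFinsupp y))
            s.powerset
            = Multiset.map (fun t => B (DU t.toFinsupp y)
                (DU ((s - t).toFinsupp + Finsupp.single j 1) y)) s.powerset := by
          apply Multiset.map_congr rfl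
          intro t ht
          have hts : t ≤ s := Multiset.mem_powerset.mp ht
          have e : (j ::ₘ s) - t = j ::ₘ (s - t) := by
            rw [← Multiset.singleton_add, ← Multiset.singleton_add,
              add_tsub_assoc_of_le hts]
          rw [e, ← Multiset.singleton_add, Multiset.toFinsupp_add,
            Multiset.toFinsupp_singleton, add_comm]
        have h2 : Multiset.map ((fun t => B (DU t.toFinsupp y) (DU ((j ::ₘ s) - t).toFinsupp y))
              ∘ Multiset.cons j) s.powerset
            = Multiset.map (fun t => B (DU (t.toFinsupp + Finsupp.single j 1) y)
                (DU (s - t).toFinsupp y)) s.powerset := by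
          apply Multiset.map_congr rfl
          intro t ht
          simp only [Function.comp]
          have e1 : (j ::ₘ s) - (j ::ₘ t) = s - t := by
            rw [← Multiset.singleton_add, ← Multiset.singleton_add,
              add_tsub_add_eq_tsub_left]
          have e2 : (j ::ₘ t).toFinsupp = t.toFinsupp + Finsupp.single j 1 := by
            rw [← Multiset.singleton_add, Multiset.toFinsupp_add,
              Multiset.toFinsupp_singleton, add_comm]
          rw [e1, e2]
        rw [h1, h2, ← Multiset.sum_map_add]
        apply congrArg
        apply Multiset.map_congr rfl
        intro t _
        rw [add_comm]
      rw [← hmatch]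
      exact hder
  -- identify DF with T
  have hDFT : ∀ ν : ℕ →₀ ℕ, DF ν = T ν := pderiv_unique hDF hTfam
  -- the bound
  intro ν y hy
  rw [hDFT ν, hT]
  set s := ν.toMultiset with hs
  set n := Multiset.card s with hn
  have hnν : (ν.sum fun _ n => n) = n := by
    rw [hn, hs, Finsupp.card_toMultiset]
    rfl
  have hbprod : ∀ m : Multiset ℕ, (0 : ℝ) ≤ (m.map b).prod := by
    intro m
    induction m using Multiset.induction_on with
    | empty => simp
    | cons a m ih =>
      rw [Multiset.map_cons, Multiset.prod_cons]
      exact mul_nonneg (hb0 a) ih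
  have hprodF : ∀ m : ℕ →₀ ℕ, (∏ j ∈ m.support, b j ^ m j) = (m.toMultiset.map b).prod := by
    intro m
    rw [Finset.prod_multiset_map_count]
    apply Finset.prod_congr
    · rw [Finsupp.toFinset_toMultiset]
    · intro j _
      rw [Finsupp.count_toMultiset]
  have hnorm : ∀ t : Multiset ℕ, ‖DU t.toFinsupp y‖
      ≤ ‖f‖ / amin ^ (Multiset.card t + 1) * Nat.factorial (Multiset.card t)
        * (t.map b).prod := by
    intro t
    have h := hreg t.toFinsupp y hy
    have hc : (t.toFinsupp.sum fun _ n => n) = Multiset.card t := by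
      have h2 := Finsupp.card_toMultiset t.toFinsupp
      rw [Multiset.toFinsupp_toMultiset] at h2
      exact h2.symm
    have hp : (∏ j ∈ t.toFinsupp.support, b j ^ t.toFinsupp j) = (t.map b).prod := by
      rw [hprodF, Multiset.toFinsupp_toMultiset]
    rwa [hc, hp] at h
  set K := CP ^ 2 * ‖f‖ ^ 2 / amin ^ (n + 2) * (s.map b).prod with hK
  have hterm : ∀ t ∈ s.powerset, |B (DU t.toFinsupp y) (DU (s - t).toFinsupp y)|
      ≤ K * ((Nat.factorial (Multiset.card t) : ℝ)
        * (Nat.factorial (n - Multiset.card t) : ℝ)) := by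
    intro t ht
    have hts : t ≤ s := Multiset.mem_powerset.mp ht
    have hcard : Multiset.card (s - t) = n - Multiset.card t := by
      rw [Multiset.card_sub hts, hn]
    have hcle : Multiset.card t ≤ n := by rw [hn]; exact Multiset.card_le_card hts
    have h1 := hnorm t
    have h2 := hnorm (s - t)
    rw [hcard] at h2
    have hb1 : (0 : ℝ) ≤ ‖f‖ / amin ^ (Multiset.card t + 1)
        * Nat.factorial (Multiset.card t) * (t.map b).prod := by
      have := hbprod t
      positivity
    have hb2 : (0 : ℝ) ≤ ‖f‖ / amin ^ (n - Multiset.card t + 1)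
        * Nat.factorial (n - Multiset.card t) * ((s - t).map b).prod := by
      have := hbprod (s - t)
      positivity
    have hPtu : (t.map b).prod * ((s - t).map b).prod = (s.map b).prod := by
      calc (t.map b).prod * ((s - t).map b).prod
          = ((t.map b) + ((s - t).map b)).prod := (Multiset.prod_add _ _).symm
        _ = ((t + (s - t)).map b).prod := by rw [Multiset.map_add]
        _ = (s.map b).prod := by rw [add_tsub_cancel_of_le hts]
    have hpow : amin ^ (Multiset.card t + 1) * amin ^ (n - Multiset.card t + 1)
        = amin ^ (n + 2) := by
      rw [← pow_add]
      congr 1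
      omega
    have step1 : |B (DU t.toFinsupp y) (DU (s - t).toFinsupp y)|
        ≤ CP ^ 2 * ‖DU t.toFinsupp y‖ * ‖DU (s - t).toFinsupp y‖ := by
      rw [hBapp]
      exact hCS _ _
    have step2 : CP ^ 2 * ‖DU t.toFinsupp y‖ * ‖DU (s - t).toFinsupp y‖
        ≤ CP ^ 2 * (‖f‖ / amin ^ (Multiset.card t + 1) * Nat.factorial (Multiset.card t)
            * (t.map b).prod)
          * (‖f‖ / amin ^ (n - Multiset.card t + 1) * Nat.factorial (n - Multiset.card t)
            * ((s - t).map b).prod) := by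
      apply mul_le_mul _ h2 (norm_nonneg _) (by positivity)
      exact mul_le_mul_of_nonneg_left h1 (by positivity)
    have step3 : CP ^ 2 * (‖f‖ / amin ^ (Multiset.card t + 1)
          * Nat.factorial (Multiset.card t) * (t.map b).prod)
        * (‖f‖ / amin ^ (n - Multiset.card t + 1) * Nat.factorial (n - Multiset.card t)
            * ((s - t).map b).prod)
        = K * ((Nat.factorial (Multiset.card t) : ℝ)
            * (Nat.factorial (n - Multiset.card t) : ℝ)) := by
      rw [hK, ← hPtu, ← hpow]
      have hne1 : amin ^ (Multiset.card t + 1) ≠ 0 := by positivity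
      have hne2 : amin ^ (n - Multiset.card t + 1) ≠ 0 := by positivity
      field_simp
    calc |B (DU t.toFinsupp y) (DU (s - t).toFinsupp y)|
        ≤ CP ^ 2 * ‖DU t.toFinsupp y‖ * ‖DU (s - t).toFinsupp y‖ := step1
      _ ≤ _ := step2
      _ = _ := step3
  have habs : |((s.powerset).map
      (fun t => B (DU t.toFinsupp y) (DU (s - t).toFinsupp y))).sum|
      ≤ ((s.powerset).map
        (fun t => |B (DU t.toFinsupp y) (DU (s - t).toFinsupp y)|)).sum := by
    have := Multiset.abs_sum_le_sum_abs
      (s := (s.powerset).map (fun t => B (DU t.toFinsupp y) (DU (s - t).toFinsupp y)))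
    rwa [Multiset.map_map] at this
  have hsum1 : ((s.powerset).map
      (fun t => |B (DU t.toFinsupp y) (DU (s - t).toFinsupp y)|)).sum
      ≤ ((s.powerset).map (fun t => K * ((Nat.factorial (Multiset.card t) : ℝ)
        * (Nat.factorial (n - Multiset.card t) : ℝ)))).sum :=
    Multiset.sum_map_le_sum_map _ _ hterm
  have hsum2 : ((s.powerset).map (fun t => K * ((Nat.factorial (Multiset.card t) : ℝ)
      * (Nat.factorial (n - Multiset.card t) : ℝ)))).sum
      = K * (Nat.factorial (n + 1) : ℝ) := by
    rw [Multiset.sum_map_mul_left]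
    congr 1
    have hcast : ((s.powerset).map (fun t => ((Nat.factorial (Multiset.card t)
        * Nat.factorial (n - Multiset.card t) : ℕ) : ℝ))).sum
        = (((s.powerset).map (fun t => Nat.factorial (Multiset.card t)
          * Nat.factorial (n - Multiset.card t))).sum : ℕ) := by
      rw [Nat.cast_multiset_sum, Multiset.map_map]
      rfl
    have he : ((s.powerset).map (fun t => (Nat.factorial (Multiset.card t) : ℝ)
        * (Nat.factorial (n - Multiset.card t) : ℝ))).sum
        = ((s.powerset).map (fun t => ((Nat.factorial (Multiset.card t)
          * Nat.factorial (n - Multiset.card t) : ℕ) : ℝ))).sum := by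
      apply congrArg
      apply Multiset.map_congr rfl
      intro t _
      push_cast
      ring
    rw [he, hcast, hn, powerset_fact_sum]
  have hfinal : K * (Nat.factorial (n + 1) : ℝ)
      = CP ^ 2 * ‖f‖ ^ 2 / amin ^ ((ν.sum fun _ n => n) + 2) *
        Nat.factorial ((ν.sum fun _ n => n) + 1) * ∏ j ∈ ν.support, b j ^ ν j := by
    rw [hnν, hprodF ν, ← hs, hK]
    ring
  calc |((s.powerset).map
      (fun t => B (DU t.toFinsupp y) (DU (s - t).toFinsupp y))).sum|
      ≤ ((s.powerset).map
        (fun t => |B (DU t.toFinsupp y) (DU (s - t).toFinsupp y)|)).sum := habs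
    _ ≤ _ := hsum1
    _ = K * (Nat.factorial (n + 1) : ℝ) := hsum2
    _ = _ := hfinal
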